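/- There exists a phase φ ∈ ℝ such that F'(U⃗) = e^{iφ} F(U⃗) for every sequence U⃗ = (U_1,…,U_m) of 2×2 unitary matrices if and only if there exists φ ∈ ℝ such that C'_{m:0} = e^{iφ} C_{m:0} and, for every i ∈ {1,…,m}, V_i(X) = V'_i(X) and V_i(Z) = V'_i(Z). -/

import Mathlib

open Matrix Complex

noncomputable section

namespace QEC

/-- The space of `n`-qubit operators: `2^n × 2^n` complex matrices, with the
index set realized as `Fin n → Fin 2`. -/
abbrev QMat (n : ℕ) := Matrix (Fin n → Fin 2) (Fin n → Fin 2) ℂ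

/-- The Pauli `X` matrix. -/
def PX : Matrix (Fin 2) (Fin 2) ℂ := !![0, 1; 1, 0]

/-- The Pauli `Y` matrix. -/
def PY : Matrix (Fin 2) (Fin 2) ℂ := !![0, -Complex.I; Complex.I, 0]

/-- The Pauli `Z` matrix. -/
def PZ : Matrix (Fin 2) (Fin 2) ℂ := !![1, 0; 0, -1]

/-- The four single-qubit Pauli matrices `𝒫 = {I, X, Y, Z}`, indexed by `Fin 4`. -/
def pauli : Fin 4 → Matrix (Fin 2) (Fin 2) ℂ := ![1, PX, PY, PZ]

/-- `A^{(k)} = I^{⊗(k-1)} ⊗ A ⊗ I^{⊗(n-k)}`: the single-qubit operator `A`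
acting on the `k`-th qubit of an `n`-qubit system. -/
def embed {n : ℕ} (k : Fin n) (A : Matrix (Fin 2) (Fin 2) ℂ) : QMat n :=
  fun x y => A (x k) (y k) * ∏ q ∈ Finset.univ.erase k, (if x q = y q then (1 : ℂ) else 0)

/-- The Kronecker product `P 0 ⊗ P 1 ⊗ ⋯ ⊗ P (n-1)` of `n` single-qubit operators. -/
def kron {n : ℕ} (P : Fin n → Matrix (Fin 2) (Fin 2) ℂ) : QMat n :=
  fun x y => ∏ q, P q (x q) (y q)

/-- The circuit `F(A⃗) = C_m A_m^{(k_m)} C_{m-1} ⋯ C_1 A_1^{(k_1)} C_0`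
(here the layers are indexed by `Fin m`, with `i : Fin m` standing for layer `i+1`). -/
def circuit {n m : ℕ} (C : Fin (m + 1) → QMat n) (k : Fin m → Fin n)
    (A : Fin m → Matrix (Fin 2) (Fin 2) ℂ) : QMat n :=
  ((List.ofFn fun i : Fin m => C i.succ * embed (k i) (A i)).reverse).prod * C 0

/-- The cumulative product `C_{m:i} = C_m C_{m-1} ⋯ C_i`. -/
def Ccum {n m : ℕ} (C : Fin (m + 1) → QMat n) (i : Fin (m + 1)) : QMat n :=
  (((List.ofFn C).reverse).take (m + 1 - (i : ℕ))).prod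

/-- `V_i(P) = C_{m:i} P^{(k_i)} C_{m:i}^†` (with `i : Fin m` standing for layer `i+1`). -/
def Vop {n m : ℕ} (C : Fin (m + 1) → QMat n) (k : Fin m → Fin n) (i : Fin m)
    (P : Matrix (Fin 2) (Fin 2) ℂ) : QMat n :=
  Ccum C i.succ * embed (k i) P * (Ccum C i.succ)ᴴ

/-- `W(P⃗) = V_m(P_m) V_{m-1}(P_{m-1}) ⋯ V_1(P_1)`. -/
def Wop {n m : ℕ} (C : Fin (m + 1) → QMat n) (k : Fin m → Fin n)
    (P : Fin m → Matrix (Fin 2) (Fin 2) ℂ) : QMat n :=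
  ((List.ofFn fun i : Fin m => Vop C k i (P i)).reverse).prod

/-- The global phase `e^{iφ}`. -/
def phase (φ : ℝ) : ℂ := Complex.exp ((φ : ℂ) * Complex.I)

/-- A unitary `C` is Clifford when it maps every Pauli string to a signed Pauli
string under conjugation. -/
def IsClifford {n : ℕ} (C : QMat n) : Prop :=
  ∀ Q : Fin n → Fin 4, ∃ (ε : ℂ) (Q' : Fin n → Fin 4), (ε = 1 ∨ ε = -1) ∧
    C * kron (fun q => pauli (Q q)) * Cᴴ = ε • kron (fun q => pauli (Q' q))

lemma kron_mul {n : ℕ} (P Q : Fin n → Matrix (Fin 2) (Fin 2) ℂ) :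
    kron P * kron Q = kron (fun q => P q * Q q) := by
  ext x y
  simp only [kron, Matrix.mul_apply]
  rw [Finset.prod_univ_sum, Fintype.piFinset_univ]
  exact Finset.sum_congr rfl fun z _ => (Finset.prod_mul_distrib).symm

lemma embed_eq_kron {n : ℕ} (k : Fin n) (A : Matrix (Fin 2) (Fin 2) ℂ) :
    embed k A = kron (fun q => if q = k then A else 1) := by
  ext x y
  simp only [embed, kron]
  rw [← Finset.mul_prod_erase Finset.univ _ (Finset.mem_univ k)]
  congr 1
  · simp
  · apply Finset.prod_congr rfl
    intro q hq
    rw [if_neg (Finset.ne_of_mem_erase hq)]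
    simp [Matrix.one_apply]

lemma embed_mul {n : ℕ} (k : Fin n) (A B : Matrix (Fin 2) (Fin 2) ℂ) :
    embed k (A * B) = embed k A * embed k B := by
  rw [embed_eq_kron, embed_eq_kron, embed_eq_kron, kron_mul]
  refine congrArg kron (funext fun q => ?_)
  by_cases h : q = k <;> simp [h]

lemma kron_one {n : ℕ} : kron (fun _ : Fin n => (1 : Matrix (Fin 2) (Fin 2) ℂ)) = 1 := by
  ext x y
  simp only [kron, Matrix.one_apply]
  by_cases h : x = y
  · subst h; simp
  · rw [if_neg h]
    obtain ⟨q, hq⟩ := Function.ne_iff.mp h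
    exact Finset.prod_eq_zero (Finset.mem_univ q) (by simp [hq])

lemma embed_one {n : ℕ} (k : Fin n) : embed k (1 : Matrix (Fin 2) (Fin 2) ℂ) = 1 := by
  rw [embed_eq_kron]
  simp only [ite_self]
  exact kron_one

lemma embed_add {n : ℕ} (k : Fin n) (A B : Matrix (Fin 2) (Fin 2) ℂ) :
    embed k (A + B) = embed k A + embed k B := by
  ext x y
  simp [embed, add_mul]

lemma embed_smul {n : ℕ} (k : Fin n) (c : ℂ) (A : Matrix (Fin 2) (Fin 2) ℂ) :
    embed k (c • A) = c • embed k A := by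
  ext x y
  simp [embed, mul_assoc]


lemma Ccum_mem {n m : ℕ} (C : Fin (m + 1) → QMat n)
    (hC : ∀ i, C i ∈ Matrix.unitaryGroup (Fin n → Fin 2) ℂ) (i : Fin (m + 1)) :
    Ccum C i ∈ Matrix.unitaryGroup (Fin n → Fin 2) ℂ := by
  apply Submonoid.list_prod_mem
  intro x hx
  have hx2 := List.mem_reverse.mp (List.take_subset _ _ hx)
  obtain ⟨j, rfl⟩ := List.mem_ofFn.mp hx2
  exact hC j

lemma conjT_mul_self {n m : ℕ} (C : Fin (m + 1) → QMat n)
    (hC : ∀ i, C i ∈ Matrix.unitaryGroup (Fin n → Fin 2) ℂ) (i : Fin (m + 1)) :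
    (Ccum C i)ᴴ * Ccum C i = 1 := by
  have h := (Unitary.mem_iff.mp (Ccum_mem C hC i)).1
  rwa [Matrix.star_eq_conjTranspose] at h

lemma self_mul_conjT {n m : ℕ} (C : Fin (m + 1) → QMat n)
    (hC : ∀ i, C i ∈ Matrix.unitaryGroup (Fin n → Fin 2) ℂ) (i : Fin (m + 1)) :
    Ccum C i * (Ccum C i)ᴴ = 1 := by
  have h := (Unitary.mem_iff.mp (Ccum_mem C hC i)).2
  rwa [Matrix.star_eq_conjTranspose] at h

lemma Vop_one {n m : ℕ} (C : Fin (m + 1) → QMat n) (k : Fin m → Fin n)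
    (hC : ∀ i, C i ∈ Matrix.unitaryGroup (Fin n → Fin 2) ℂ) (i : Fin m) :
    Vop C k i 1 = 1 := by
  rw [Vop, embed_one, mul_one, self_mul_conjT C hC]

lemma Vop_mul {n m : ℕ} (C : Fin (m + 1) → QMat n) (k : Fin m → Fin n)
    (hC : ∀ i, C i ∈ Matrix.unitaryGroup (Fin n → Fin 2) ℂ) (i : Fin m)
    (P Q : Matrix (Fin 2) (Fin 2) ℂ) :
    Vop C k i (P * Q) = Vop C k i P * Vop C k i Q := by
  have h : (Ccum C i.succ)ᴴ * Ccum C i.succ = 1 := conjT_mul_self C hC i.succ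
  unfold Vop
  rw [embed_mul]
  have h2 : Ccum C i.succ * embed (k i) P * (Ccum C i.succ)ᴴ *
      (Ccum C i.succ * embed (k i) Q * (Ccum C i.succ)ᴴ) =
      Ccum C i.succ * embed (k i) P * ((Ccum C i.succ)ᴴ * Ccum C i.succ) *
      (embed (k i) Q * (Ccum C i.succ)ᴴ) := by noncomm_ring
  rw [h2, h, mul_one]
  noncomm_ring

lemma Vop_add {n m : ℕ} (C : Fin (m + 1) → QMat n) (k : Fin m → Fin n) (i : Fin m)
    (P Q : Matrix (Fin 2) (Fin 2) ℂ) :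
    Vop C k i (P + Q) = Vop C k i P + Vop C k i Q := by
  simp [Vop, embed_add, Matrix.mul_add, Matrix.add_mul]

lemma Vop_smul {n m : ℕ} (C : Fin (m + 1) → QMat n) (k : Fin m → Fin n) (i : Fin m)
    (c : ℂ) (P : Matrix (Fin 2) (Fin 2) ℂ) :
    Vop C k i (c • P) = c • Vop C k i P := by
  simp [Vop, embed_smul, Matrix.mul_smul, Matrix.smul_mul]

lemma matrix_decomp (M : Matrix (Fin 2) (Fin 2) ℂ) :
    M = ((M 0 0 + M 1 1) / 2) • (1 : Matrix (Fin 2) (Fin 2) ℂ)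
      + ((M 0 1 + M 1 0) / 2) • PX
      + (Complex.I * (M 0 1 - M 1 0) / 2) • PY
      + ((M 0 0 - M 1 1) / 2) • PZ := by
  ext i j
  fin_cases i <;> fin_cases j <;> simp [PX, PY, PZ, Matrix.one_apply]
  · ring
  · linear_combination ((M 0 1 - M 1 0) / 2) * Complex.I_sq
  · linear_combination (-((M 0 1 - M 1 0) / 2)) * Complex.I_sq
  · ring

lemma PY_eq : PY = Complex.I • (PX * PZ) := by
  ext i j
  fin_cases i <;> fin_cases j <;>
    simp [PX, PY, PZ, Matrix.mul_apply, Fin.sum_univ_two]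

lemma Vop_eq_of_XZ {n m : ℕ} (C C' : Fin (m + 1) → QMat n)
    (hC : ∀ i, C i ∈ Matrix.unitaryGroup (Fin n → Fin 2) ℂ)
    (hC' : ∀ i, C' i ∈ Matrix.unitaryGroup (Fin n → Fin 2) ℂ)
    (k l : Fin m → Fin n) (i : Fin m)
    (hX : Vop C k i PX = Vop C' l i PX) (hZ : Vop C k i PZ = Vop C' l i PZ)
    (M : Matrix (Fin 2) (Fin 2) ℂ) : Vop C k i M = Vop C' l i M := by
  have hY : Vop C k i PY = Vop C' l i PY := by
    rw [PY_eq, Vop_smul, Vop_smul, Vop_mul C k hC, Vop_mul C' l hC', hX, hZ]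
  have h1 : Vop C k i 1 = Vop C' l i 1 := by rw [Vop_one C k hC, Vop_one C' l hC']
  conv_lhs => rw [matrix_decomp M]
  conv_rhs => rw [matrix_decomp M]
  rw [Vop_add, Vop_add, Vop_add, Vop_add, Vop_add, Vop_add,
    Vop_smul, Vop_smul, Vop_smul, Vop_smul, Vop_smul, Vop_smul, Vop_smul, Vop_smul,
    h1, hX, hY, hZ]


lemma prod_ofFn_reverse_one {M : Type*} [Monoid M] {m : ℕ} (h : Fin m → M)
    (h1 : ∀ j, h j = 1) : (List.ofFn h).reverse.prod = 1 := by
  apply List.prod_eq_one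
  intro x hx
  obtain ⟨j, rfl⟩ := List.mem_ofFn.mp (List.mem_reverse.mp hx)
  exact h1 j

lemma prod_ofFn_reverse_single {M : Type*} [Monoid M] :
    ∀ {m : ℕ} (h : Fin m → M) (i : Fin m), (∀ j, j ≠ i → h j = 1) →
      (List.ofFn h).reverse.prod = h i := by
  intro m
  induction m with
  | zero => exact fun h i _ => i.elim0
  | succ m ih =>
    intro h i h1
    rw [List.ofFn_succ, List.reverse_cons, List.prod_append, List.prod_cons, List.prod_nil,
      mul_one]
    rcases Fin.eq_zero_or_eq_succ i with hi | ⟨j, hj⟩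
    · subst hi
      rw [prod_ofFn_reverse_one _ (fun j => h1 _ (Fin.succ_ne_zero j)), one_mul]
    · subst hj
      rw [ih (fun j' => h j'.succ) j
        (fun j' hj' => h1 _ (fun hh => hj' (Fin.succ_injective _ hh))),
        h1 0 (Fin.succ_ne_zero j).symm, mul_one]

lemma tele_step {α : Type*} [Ring α] {gp fp D Dh E c cm : α}
    (hu : Dh * D = 1) (hih : gp * D = fp * cm) :
    gp * (D * E * Dh) * (D * c) = fp * (cm * E) * c := by
  have h2 : gp * (D * E * Dh) * (D * c) = gp * D * (E * ((Dh * D) * c)) := by noncomm_ring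
  rw [h2, hu, one_mul, ← mul_assoc, hih]
  noncomm_ring

set_option maxHeartbeats 1000000 in
lemma circuit_key {n m : ℕ} (C : Fin (m + 1) → QMat n)
    (hC : ∀ i, C i ∈ Matrix.unitaryGroup (Fin n → Fin 2) ℂ)
    (k : Fin m → Fin n) (A : Fin m → Matrix (Fin 2) (Fin 2) ℂ) :
    ∀ t, t ≤ m →
      ((List.ofFn fun i : Fin m => Vop C k i (A i)).reverse.take t).prod *
        ((List.ofFn C).reverse.take (t + 1)).prod =
      ((List.ofFn fun i : Fin m => C i.succ * embed (k i) (A i)).reverse.take t).prod *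
        C ⟨m - t, by omega⟩ := by
  intro t
  induction t with
  | zero =>
    intro _
    rw [List.take_zero, List.take_zero, List.prod_nil, one_mul, one_mul,
      List.prod_take_succ _ 0 (by simp), List.take_zero, List.prod_nil, one_mul,
      List.getElem_reverse, List.getElem_ofFn]
    exact congrArg C (by apply Fin.ext; simp)
  | succ t iht =>
    intro ht
    have iht' := iht (by omega)
    have h1 : t < (List.ofFn fun i : Fin m => Vop C k i (A i)).reverse.length := by
      simp; omega
    have h2 : t + 1 < (List.ofFn C).reverse.length := by simp; omega
    have h3 : t < (List.ofFn fun i : Fin m => C i.succ * embed (k i) (A i)).reverse.length := by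
      simp; omega
    set i : Fin m := ⟨m - 1 - t, by omega⟩ with hi
    have e1 : (List.ofFn fun i : Fin m => Vop C k i (A i)).reverse[t]'h1 = Vop C k i (A i) := by
      rw [List.getElem_reverse, List.getElem_ofFn]
      exact congrArg (fun j : Fin m => Vop C k j (A j))
        (by apply Fin.ext; simp [hi])
    have e2 : (List.ofFn C).reverse[t + 1]'h2 = C ⟨m - 1 - t, by omega⟩ := by
      rw [List.getElem_reverse, List.getElem_ofFn]
      exact congrArg C (by apply Fin.ext; simp; omega)
    have e3 : (List.ofFn fun i : Fin m => C i.succ * embed (k i) (A i)).reverse[t]'h3 =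
        C i.succ * embed (k i) (A i) := by
      rw [List.getElem_reverse, List.getElem_ofFn]
      exact congrArg (fun j : Fin m => C j.succ * embed (k j) (A j))
        (by apply Fin.ext; simp [hi])
    rw [List.prod_take_succ _ t h1, List.prod_take_succ _ (t + 1) h2,
      List.prod_take_succ _ t h3, e1, e2, e3]
    have hcc : Ccum C i.succ = ((List.ofFn C).reverse.take (t + 1)).prod := by
      rw [Ccum]
      congr 2
      simp [hi]
      omega
    have hsuc : C (⟨m - (t + 1), by omega⟩ : Fin (m + 1)) = C ⟨m - 1 - t, by omega⟩ := by
      exact congrArg C (by apply Fin.ext; simp; omega)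
    have hms : C i.succ = C (⟨m - t, by omega⟩ : Fin (m + 1)) := by
      exact congrArg C (by apply Fin.ext; simp [hi]; omega)
    simp only [Vop]
    rw [hcc, hsuc]
    exact tele_step (hcc ▸ conjT_mul_self C hC i.succ)
      (iht'.trans (congrArg (fun x => _ * x) hms.symm))

lemma circuit_eq_Wop {n m : ℕ} (C : Fin (m + 1) → QMat n)
    (hC : ∀ i, C i ∈ Matrix.unitaryGroup (Fin n → Fin 2) ℂ)
    (k : Fin m → Fin n) (A : Fin m → Matrix (Fin 2) (Fin 2) ℂ) :
    circuit C k A = Wop C k A * Ccum C 0 := by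
  have h := circuit_key C hC k A m le_rfl
  rw [List.take_of_length_le (by simp), List.take_of_length_le (by simp),
    List.take_of_length_le (by simp)] at h
  rw [circuit, Wop, Ccum]
  rw [List.take_of_length_le (by simp), h]
  exact congrArg _ (congrArg C (by apply Fin.ext; simp))

lemma PX_mem : PX ∈ Matrix.unitaryGroup (Fin 2) ℂ := by
  rw [Matrix.mem_unitaryGroup_iff]
  ext i j
  fin_cases i <;> fin_cases j <;>
    simp [PX, Matrix.mul_apply, Fin.sum_univ_two, Matrix.star_eq_conjTranspose,
      Matrix.conjTranspose_apply, Matrix.one_apply]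

lemma PZ_mem : PZ ∈ Matrix.unitaryGroup (Fin 2) ℂ := by
  rw [Matrix.mem_unitaryGroup_iff]
  ext i j
  fin_cases i <;> fin_cases j <;>
    simp [PZ, Matrix.mul_apply, Fin.sum_univ_two, Matrix.star_eq_conjTranspose,
      Matrix.conjTranspose_apply, Matrix.one_apply]

lemma phase_ne_zero (φ : ℝ) : phase φ ≠ 0 := Complex.exp_ne_zero _

lemma mul_cancel_unitary {N : Type*} [DecidableEq N] [Fintype N] {D A B : Matrix N N ℂ}
    (hD : D ∈ Matrix.unitaryGroup N ℂ) (h : A * D = B * D) : A = B := by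
  have hDD : D * Dᴴ = 1 := by
    have h2 := (Unitary.mem_iff.mp hD).2
    rwa [Matrix.star_eq_conjTranspose] at h2
  calc A = A * (D * Dᴴ) := by rw [hDD, mul_one]
    _ = A * D * Dᴴ := by rw [mul_assoc]
    _ = B * D * Dᴴ := by rw [h]
    _ = B * (D * Dᴴ) := by rw [mul_assoc]
    _ = B := by rw [hDD, mul_one]

/-- There exists a phase `φ` with `F'(U⃗) = e^{iφ} F(U⃗)` for all sequences of
2×2 unitaries iff there exists `φ` with `C'_{m:0} = e^{iφ} C_{m:0}` and
`V_i(X) = V'_i(X)`, `V_i(Z) = V'_i(Z)` for all `i`. -/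
theorem stmt0 (n m : ℕ) (hn : 1 ≤ n) (hm : 1 ≤ m)
    (C C' : Fin (m + 1) → QMat n)
    (hC : ∀ i, C i ∈ Matrix.unitaryGroup (Fin n → Fin 2) ℂ)
    (hC' : ∀ i, C' i ∈ Matrix.unitaryGroup (Fin n → Fin 2) ℂ)
    (k l : Fin m → Fin n) :
    (∃ φ : ℝ, ∀ U : Fin m → Matrix (Fin 2) (Fin 2) ℂ,
        (∀ i, U i ∈ Matrix.unitaryGroup (Fin 2) ℂ) →
        circuit C' l U = phase φ • circuit C k U) ↔
    (∃ φ : ℝ, Ccum C' 0 = phase φ • Ccum C 0 ∧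
        ∀ i : Fin m, Vop C k i PX = Vop C' l i PX ∧ Vop C k i PZ = Vop C' l i PZ) := by
  constructor
  · rintro ⟨φ, hφ⟩
    have h1 := hφ (fun _ => 1) (fun _ => one_mem _)
    rw [circuit_eq_Wop C hC, circuit_eq_Wop C' hC', Wop, Wop,
      prod_ofFn_reverse_one _ (fun j => Vop_one C k hC j), one_mul,
      prod_ofFn_reverse_one _ (fun j => Vop_one C' l hC' j), one_mul] at h1
    have main : ∀ (i : Fin m) (P : Matrix (Fin 2) (Fin 2) ℂ),
        P ∈ Matrix.unitaryGroup (Fin 2) ℂ → Vop C k i P = Vop C' l i P := by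
      intro i P hP
      have hU : ∀ j : Fin m, (if j = i then P else 1) ∈ Matrix.unitaryGroup (Fin 2) ℂ := by
        intro j
        split
        · exact hP
        · exact one_mem _
      have h2 := hφ (fun j => if j = i then P else 1) hU
      have hii : (if i = i then P else 1) = P := if_pos rfl
      rw [circuit_eq_Wop C hC, circuit_eq_Wop C' hC', Wop, Wop,
        prod_ofFn_reverse_single _ i (fun j hj => by simp [hj, Vop_one C k hC, Vop_one C' l hC']),
        prod_ofFn_reverse_single _ i (fun j hj => by simp [hj, Vop_one C k hC, Vop_one C' l hC']),
        hii, h1, mul_smul_comm] at h2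
      have h3 := smul_right_injective (QMat n) (phase_ne_zero φ) h2
      exact (mul_cancel_unitary (Ccum_mem C hC 0) h3).symm
    exact ⟨φ, h1, fun i => ⟨main i PX PX_mem, main i PZ PZ_mem⟩⟩
  · rintro ⟨φ, hc, hV⟩
    refine ⟨φ, fun U _ => ?_⟩
    have hW : (fun j : Fin m => Vop C' l j (U j)) = fun j => Vop C k j (U j) :=
      funext fun j => (Vop_eq_of_XZ C C' hC hC' k l j (hV j).1 (hV j).2 (U j)).symm
    rw [circuit_eq_Wop C hC, circuit_eq_Wop C' hC', hc, Wop, Wop, hW, mul_smul_comm]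


end QEC
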